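/- arXiv:2511.13038 — 2 statements merged into one kernel-verified Lean document; each statement's English description precedes it below -/
import Mathlib

section
/- Let 0 < α < 1 and let ρ : [0,∞) → ℂ be continuously differentiable. If ρ satisfies the Volterra integral equation ρ(t) = ρ(0) + (1/Γ(α)) ∫₀ᵗ (t−τ)^{α−1} L(ρ(τ)) dτ for a continuous linear map L, then the Caputo derivative of ρ satisfies ⁰D_t^α ρ(t) = L(ρ(t)) for all t > 0, where ⁰D_t^α ρ(t) = (1/Γ(1−α)) ∫₀ᵗ (t−τ)^{−α} ρ'(τ) dτ. -/
open MeasureTheory intervalIntegral Set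


lemma measurable_rpow_const (c : ℝ) : Measurable fun x : ℝ => x ^ c := by
  have h : ∀ x : ℝ, x ^ c = if x = 0 then (if c = 0 then 1 else 0) else
      if 0 < x then Real.exp (Real.log x * c)
      else Real.exp (Real.log x * c) * Real.cos (c * Real.pi) := by
    intro x
    rcases lt_trichotomy x 0 with h | h | h
    · rw [if_neg h.ne, if_neg (not_lt.mpr h.le), Real.rpow_def_of_neg h, mul_comm c]
    · subst h
      by_cases hc : c = 0 <;> simp [hc, Real.zero_rpow]
    · rw [if_neg h.ne', if_pos h, Real.rpow_def_of_pos h]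
  simp only [h]
  refine Measurable.ite (by simp) measurable_const (Measurable.ite ?_ ?_ ?_)
  · exact measurableSet_lt measurable_const measurable_id
  · exact (Real.measurable_log.mul measurable_const).exp
  · exact ((Real.measurable_log.mul measurable_const).exp).mul_const _

lemma ii_ker (r : ℝ) (hr : -1 < r) (u v : ℝ) :
    IntervalIntegrable (fun s => ((v - s) ^ r : ℝ)) volume u v := by
  have := (intervalIntegral.intervalIntegrable_rpow' (a := v - u) (b := v - v) hr).comp_sub_left v
  simpa using this

lemma ii_ker_smul {r : ℝ} (hr : -1 < r) {f : ℝ → ℂ} (hf : Continuous f) (u v : ℝ) :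
    IntervalIntegrable (fun s => ((v - s) ^ r : ℝ) • f s) volume u v := by
  have h1 := ii_ker r hr u v
  have h2 : IntervalIntegrable (fun s => (((v - s) ^ r : ℝ) : ℂ)) volume u v := by
    rw [intervalIntegrable_iff] at h1 ⊢
    exact (Complex.ofRealCLM : ℝ →L[ℝ] ℂ).integrable_comp h1
  have h3 := h2.mul_continuousOn hf.continuousOn
  simpa [Complex.real_smul] using h3

lemma ii_ker_mul {r : ℝ} (hr : -1 < r) {f : ℝ → ℝ} (hf : Continuous f) (u v : ℝ) :
    IntervalIntegrable (fun s => ((v - s) ^ r : ℝ) * f s) volume u v :=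
  (ii_ker r hr u v).mul_continuousOn hf.continuousOn

lemma ker_integral {r : ℝ} (hr : -1 < r) (v : ℝ) :
    ∫ s in (0:ℝ)..v, ((v - s) ^ r : ℝ) = v ^ (r + 1) / (r + 1) := by
  rw [integral_comp_sub_left (fun x => x ^ r) v, sub_self, sub_zero,
    integral_rpow (Or.inl hr), Real.zero_rpow (by linarith), sub_zero]

lemma real_beta {a b : ℝ} (ha : 0 < a) (hb : 0 < b) :
    ∫ x in (0:ℝ)..1, x ^ (a - 1) * (1 - x) ^ (b - 1) =
      Real.Gamma a * Real.Gamma b / Real.Gamma (a + b) := by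
  have key := Complex.Gamma_mul_Gamma_eq_betaIntegral (s := (a:ℂ)) (t := (b:ℂ))
    (by simpa using ha) (by simpa using hb)
  have hint : Complex.betaIntegral (a:ℂ) (b:ℂ) =
      ((∫ x in (0:ℝ)..1, x ^ (a - 1) * (1 - x) ^ (b - 1) : ℝ) : ℂ) := by
    rw [Complex.betaIntegral, ← intervalIntegral.integral_ofReal]
    refine intervalIntegral.integral_congr fun x hx => ?_
    rw [Set.uIcc_of_le (by norm_num : (0:ℝ) ≤ 1)] at hx
    rw [Complex.ofReal_mul, Complex.ofReal_cpow hx.1, Complex.ofReal_cpow (by linarith [hx.2] : (0:ℝ) ≤ 1 - x)]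
    push_cast
    ring
  rw [hint, ← Complex.ofReal_add, Complex.Gamma_ofReal, Complex.Gamma_ofReal,
    Complex.Gamma_ofReal, ← Complex.ofReal_mul, ← Complex.ofReal_mul] at key
  have := Complex.ofReal_injective key
  have hne : Real.Gamma (a + b) ≠ 0 := (Real.Gamma_pos_of_pos (by linarith)).ne'
  field_simp
  linarith [this]

lemma beta_st {a b s t : ℝ} (ha : 0 < a) (hb : 0 < b) (hst : s < t) :
    ∫ τ in s..t, (t - τ) ^ (a - 1) * (τ - s) ^ (b - 1) =
      (t - s) ^ (a + b - 1) * (Real.Gamma a * Real.Gamma b / Real.Gamma (a + b)) := by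
  have hts : (0:ℝ) < t - s := by linarith
  have h := intervalIntegral.integral_comp_mul_add
    (a := (0:ℝ)) (b := 1) (c := t - s) (d := s)
    (fun τ => (t - τ) ^ (a - 1) * (τ - s) ^ (b - 1)) hts.ne'
  simp only [mul_zero, zero_add, mul_one, sub_add_cancel] at h
  -- h : ∫ x in 0..1, (t - ((t-s)*x + s))^(a-1) * ((t-s)*x + s - s)^(b-1)
  --      = (t-s)⁻¹ • ∫ τ in s..t, ...
  have h2 : (∫ x in (0:ℝ)..1, (t - ((t - s) * x + s)) ^ (a - 1) * ((t - s) * x + s - s) ^ (b - 1))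
      = (t - s) ^ (a + b - 2) * (Real.Gamma a * Real.Gamma b / Real.Gamma (a + b)) := by
    rw [show (∫ x in (0:ℝ)..1, (t - ((t - s) * x + s)) ^ (a - 1) * ((t - s) * x + s - s) ^ (b - 1))
        = ∫ x in (0:ℝ)..1, (t - s) ^ (a + b - 2) * (x ^ (b - 1) * (1 - x) ^ (a - 1)) from ?_,
      intervalIntegral.integral_const_mul, real_beta hb ha]
    · rw [mul_comm (Real.Gamma b), add_comm b a]
    · refine intervalIntegral.integral_congr fun x hx => ?_
      rw [Set.uIcc_of_le (by norm_num : (0:ℝ) ≤ 1)] at hx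
      have e1 : t - ((t - s) * x + s) = (t - s) * (1 - x) := by ring
      have e2 : (t - s) * x + s - s = (t - s) * x := by ring
      rw [e1, e2, Real.mul_rpow hts.le (by linarith [hx.2]), Real.mul_rpow hts.le hx.1,
        mul_mul_mul_comm, ← Real.rpow_add hts, show a - 1 + (b - 1) = a + b - 2 by ring]
      ring
  rw [h2] at h
  have := h.symm
  rw [inv_smul_eq_iff₀ hts.ne'] at this
  rw [this, smul_eq_mul, ← mul_assoc]
  congr 1
  rw [show a + b - 1 = 1 + (a + b - 2) by ring, Real.rpow_add hts, Real.rpow_one]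

lemma fubini_rl {a b : ℝ} (ha : 0 < a) (hb : 0 < b) {f : ℝ → ℂ} (hf : Continuous f)
    {t : ℝ} (ht : 0 < t) :
    ∫ τ in (0:ℝ)..t, ((t - τ) ^ (a - 1) : ℝ) •
        (∫ s in (0:ℝ)..τ, ((τ - s) ^ (b - 1) : ℝ) • f s)
      = (Real.Gamma a * Real.Gamma b / Real.Gamma (a + b)) •
        ∫ s in (0:ℝ)..t, ((t - s) ^ (a + b - 1) : ℝ) • f s := by
  obtain ⟨M, hM⟩ := (isCompact_Icc (a := (0:ℝ)) (b := t)).exists_bound_of_continuousOn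
    hf.continuousOn
  have hM0 : 0 ≤ M := le_trans (norm_nonneg _) (hM 0 ⟨le_refl 0, ht.le⟩)
  set μ := volume.restrict (Set.Ioc (0:ℝ) t) with hμ
  set K : ℝ → ℝ → ℂ := fun τ s =>
    if s < τ then (((t - τ) ^ (a - 1) * (τ - s) ^ (b - 1) : ℝ)) • f s else 0 with hK
  -- measurability
  have measK : StronglyMeasurable (Function.uncurry K) := by
    have m1 : Measurable fun p : ℝ × ℝ => ((t - p.1) ^ (a - 1) * (p.1 - p.2) ^ (b - 1) : ℝ) :=
      ((measurable_rpow_const (a - 1)).comp (measurable_const.sub measurable_fst)).mul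
        ((measurable_rpow_const (b - 1)).comp (measurable_fst.sub measurable_snd))
    have m2 : StronglyMeasurable fun p : ℝ × ℝ =>
        (((t - p.1) ^ (a - 1) * (p.1 - p.2) ^ (b - 1) : ℝ)) • f p.2 :=
      m1.stronglyMeasurable.smul (hf.comp continuous_snd).stronglyMeasurable
    have he : Function.uncurry K = Set.indicator {p : ℝ × ℝ | p.2 < p.1}
        (fun p => (((t - p.1) ^ (a - 1) * (p.1 - p.2) ^ (b - 1) : ℝ)) • f p.2) := by
      funext p
      by_cases h : p.2 < p.1 <;>
        simp [Function.uncurry, hK, h, Set.indicator_apply]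
    rw [he]
    exact m2.indicator (measurableSet_lt measurable_snd measurable_fst)
  have hIioInter : ∀ τ ∈ Set.Ioc (0:ℝ) t, Set.Iio τ ∩ Set.Ioc 0 t = Set.Ioo 0 τ := by
    intro τ hτ
    ext x
    simp only [Set.mem_inter_iff, Set.mem_Iio, Set.mem_Ioc, Set.mem_Ioo]
    exact ⟨fun h => ⟨h.2.1, h.1⟩, fun h => ⟨h.2, h.1, le_trans h.2.le hτ.2⟩⟩
  have hKslice : ∀ τ, (K τ) = Set.indicator (Set.Iio τ)
      (fun s => (((t - τ) ^ (a - 1) * (τ - s) ^ (b - 1) : ℝ)) • f s) := by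
    intro τ; funext s
    by_cases h : s < τ <;> simp [hK, h, Set.indicator_apply]
  -- slice integrability
  have slice : ∀ τ ∈ Set.Ioc (0:ℝ) t, Integrable (K τ) μ := by
    intro τ hτ
    rw [hKslice τ, integrable_indicator_iff measurableSet_Iio]
    have : IntegrableOn
        (fun s => (((t - τ) ^ (a - 1) * (τ - s) ^ (b - 1) : ℝ)) • f s) (Set.Ioo 0 τ) volume := by
      have h1 : IntervalIntegrable
          (fun s => (((t - τ) ^ (a - 1) * (τ - s) ^ (b - 1) : ℝ)) • f s) volume 0 τ := by
        have h0 := ((ii_ker_smul (by linarith : (-1:ℝ) < b - 1) hf 0 τ).smul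
          ((t - τ) ^ (a - 1) : ℝ))
        have he : (((t - τ) ^ (a - 1) : ℝ) • fun s => ((τ - s) ^ (b - 1) : ℝ) • f s)
            = fun s => (((t - τ) ^ (a - 1) * (τ - s) ^ (b - 1) : ℝ)) • f s := by
          funext s
          simp [smul_smul, mul_assoc]
        rwa [he] at h0
      have := (intervalIntegrable_iff.mp h1)
      rw [Set.uIoc_of_le hτ.1.le] at this
      exact this.mono_set Set.Ioo_subset_Ioc_self
    rw [IntegrableOn, hμ, Measure.restrict_restrict measurableSet_Iio, hIioInter τ hτ]
    exact this
  -- norm bound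
  have norm_int : ∀ τ ∈ Set.Ioc (0:ℝ) t,
      (∫ s, ‖K τ s‖ ∂μ) ≤ (t - τ) ^ (a - 1) * (M * (t ^ b / b)) := by
    intro τ hτ
    have e1 : (∫ s, ‖K τ s‖ ∂μ)
        = ∫ s in Set.Ioo (0:ℝ) τ, ‖(((t - τ) ^ (a - 1) * (τ - s) ^ (b - 1) : ℝ)) • f s‖ := by
      have e0 : (fun s => ‖K τ s‖) = Set.indicator (Set.Iio τ)
          (fun s => ‖(((t - τ) ^ (a - 1) * (τ - s) ^ (b - 1) : ℝ)) • f s‖) := by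
        funext s
        by_cases h : s < τ <;> simp [hK, h, Set.indicator_apply]
      rw [e0, MeasureTheory.integral_indicator measurableSet_Iio, hμ,
        Measure.restrict_restrict measurableSet_Iio, hIioInter τ hτ]
    rw [e1]
    have e2 : ∀ s ∈ Set.Ioo (0:ℝ) τ,
        ‖(((t - τ) ^ (a - 1) * (τ - s) ^ (b - 1) : ℝ)) • f s‖
          = (t - τ) ^ (a - 1) * ((τ - s) ^ (b - 1) * ‖f s‖) := by
      intro s hs
      rw [norm_smul, Real.norm_eq_abs, abs_of_nonneg
        (mul_nonneg (Real.rpow_nonneg (by linarith [hτ.2]) _)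
          (Real.rpow_nonneg (by linarith [hs.2]) _)), mul_assoc]
    rw [setIntegral_congr_fun measurableSet_Ioo e2, MeasureTheory.integral_const_mul]
    have hker : IntegrableOn (fun s => (τ - s) ^ (b - 1) * ‖f s‖) (Set.Ioo 0 τ) volume := by
      have h1 := intervalIntegrable_iff.mp
        (ii_ker_mul (by linarith : (-1:ℝ) < b - 1) hf.norm 0 τ)
      rw [Set.uIoc_of_le hτ.1.le] at h1
      exact h1.mono_set Set.Ioo_subset_Ioc_self
    have hkerM : IntegrableOn (fun s => (τ - s) ^ (b - 1) * M) (Set.Ioo 0 τ) volume := by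
      have h1 := intervalIntegrable_iff.mp
        (ii_ker_mul (f := fun _ => M) (by linarith : (-1:ℝ) < b - 1) continuous_const 0 τ)
      rw [Set.uIoc_of_le hτ.1.le] at h1
      exact h1.mono_set Set.Ioo_subset_Ioc_self
    have step1 : (∫ s in Set.Ioo (0:ℝ) τ, (τ - s) ^ (b - 1) * ‖f s‖)
        ≤ ∫ s in Set.Ioo (0:ℝ) τ, (τ - s) ^ (b - 1) * M := by
      refine setIntegral_mono_on hker hkerM measurableSet_Ioo fun s hs => ?_
      exact mul_le_mul_of_nonneg_left
        (hM s ⟨hs.1.le, le_trans hs.2.le hτ.2⟩)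
        (Real.rpow_nonneg (by linarith [hs.2]) _)
    have step2 : (∫ s in Set.Ioo (0:ℝ) τ, (τ - s) ^ (b - 1) * M) ≤ M * (t ^ b / b) := by
      rw [MeasureTheory.integral_mul_const, ← integral_Ioc_eq_integral_Ioo,
        ← intervalIntegral.integral_of_le hτ.1.le,
        ker_integral (by linarith : (-1:ℝ) < b - 1) τ, sub_add_cancel]
      rw [mul_comm]
      refine mul_le_mul_of_nonneg_left ?_ hM0
      exact (div_le_div_iff_of_pos_right hb).mpr (Real.rpow_le_rpow hτ.1.le hτ.2 hb.le)
    refine le_trans (mul_le_mul_of_nonneg_left step1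
      (Real.rpow_nonneg (by linarith [hτ.2]) _)) ?_
    exact mul_le_mul_of_nonneg_left step2 (Real.rpow_nonneg (by linarith [hτ.2]) _)
  -- product integrability
  have hKint : Integrable (Function.uncurry K) (μ.prod μ) := by
    rw [MeasureTheory.integrable_prod_iff measK.aestronglyMeasurable]
    constructor
    · filter_upwards [ae_restrict_mem measurableSet_Ioc] with τ hτ
      exact slice τ hτ
    · refine Integrable.mono' (g := fun τ => (t - τ) ^ (a - 1) * (M * (t ^ b / b))) ?_ ?_ ?_
      · have h1 := ((ii_ker (a - 1) (by linarith) 0 t).mul_const (M * (t ^ b / b)))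
        have := intervalIntegrable_iff.mp h1
        rwa [Set.uIoc_of_le ht.le] at this
      · exact measK.aestronglyMeasurable.norm.integral_prod_right'
      · filter_upwards [ae_restrict_mem measurableSet_Ioc] with τ hτ
        rw [Real.norm_eq_abs, abs_of_nonneg (integral_nonneg fun s => norm_nonneg _)]
        exact norm_int τ hτ
  have swap := MeasureTheory.integral_integral_swap hKint
  -- identify the LHS
  have lhs_eq : (∫ τ in (0:ℝ)..t, ((t - τ) ^ (a - 1) : ℝ) •
      (∫ s in (0:ℝ)..τ, ((τ - s) ^ (b - 1) : ℝ) • f s)) = ∫ τ, (∫ s, K τ s ∂μ) ∂μ := by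
    rw [intervalIntegral.integral_of_le ht.le]
    refine setIntegral_congr_fun measurableSet_Ioc fun τ hτ => ?_
    rw [hKslice τ, MeasureTheory.integral_indicator measurableSet_Iio, hμ,
      Measure.restrict_restrict measurableSet_Iio, hIioInter τ hτ,
      ← integral_Ioc_eq_integral_Ioo, ← intervalIntegral.integral_of_le hτ.1.le,
      ← intervalIntegral.integral_smul]
    refine intervalIntegral.integral_congr fun s hs => ?_
    simp [smul_smul, mul_assoc]
  -- identify the RHS
  have rhs_eq : (∫ s, (∫ τ, K τ s ∂μ) ∂μ)
      = (Real.Gamma a * Real.Gamma b / Real.Gamma (a + b)) •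
        ∫ s in (0:ℝ)..t, ((t - s) ^ (a + b - 1) : ℝ) • f s := by
    have inner : ∀ s ∈ Set.Ioo (0:ℝ) t, (∫ τ, K τ s ∂μ)
        = (Real.Gamma a * Real.Gamma b / Real.Gamma (a + b)) •
          (((t - s) ^ (a + b - 1) : ℝ) • f s) := by
      intro s hs
      have e2 : (fun τ => K τ s) = Set.indicator (Set.Ioi s)
          (fun τ => (((t - τ) ^ (a - 1) * (τ - s) ^ (b - 1) : ℝ)) • f s) := by
        funext τ
        by_cases h : s < τ <;> simp [hK, h, Set.indicator_apply, Set.mem_Ioi]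
      rw [e2, MeasureTheory.integral_indicator measurableSet_Ioi, hμ,
        Measure.restrict_restrict measurableSet_Ioi,
        show Set.Ioi s ∩ Set.Ioc 0 t = Set.Ioc s t by
          rw [Set.inter_comm, Set.Ioc_inter_Ioi, sup_eq_right.mpr hs.1.le],
        ← intervalIntegral.integral_of_le hs.2.le, intervalIntegral.integral_smul_const,
        beta_st ha hb hs.2, smul_smul, mul_comm]
    rw [show (∫ s, (∫ τ, K τ s ∂μ) ∂μ) = ∫ s in Set.Ioo (0:ℝ) t,
        (Real.Gamma a * Real.Gamma b / Real.Gamma (a + b)) •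
          (((t - s) ^ (a + b - 1) : ℝ) • f s) from by
      rw [hμ, integral_Ioc_eq_integral_Ioo]
      exact setIntegral_congr_fun measurableSet_Ioo inner]
    rw [MeasureTheory.integral_smul, intervalIntegral.integral_of_le ht.le,
      integral_Ioc_eq_integral_Ioo]
  rw [lhs_eq, swap, rhs_eq]

lemma conv_continuousOn {r : ℝ} (hr : -1 < r) {f : ℝ → ℂ} (hf : Continuous f)
    {T : ℝ} (hT : 0 < T) :
    ContinuousOn (fun u => ∫ τ in (0:ℝ)..u, ((u - τ) ^ r : ℝ) • f τ) (Set.Icc 0 T) := by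
  obtain ⟨M, hM⟩ := (isCompact_Icc (a := (0:ℝ)) (b := T + 1)).exists_bound_of_continuousOn
    hf.continuousOn
  have hM0 : 0 ≤ M := le_trans (norm_nonneg _) (hM 0 ⟨le_refl 0, by linarith⟩)
  set μT := volume.restrict (Set.Ioc (0:ℝ) T) with hμT
  set ψ : ℝ → ℝ → ℂ := fun u v =>
    Set.indicator (Set.Ioc 0 u) (fun v => ((v : ℝ) ^ r : ℝ) • f (u - v)) v with hψ
  have hDE : ∀ u ∈ Set.Icc (0:ℝ) T,
      (∫ τ in (0:ℝ)..u, ((u - τ) ^ r : ℝ) • f τ) = ∫ v, ψ u v ∂μT := by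
    intro u hu
    have e1 : (∫ τ in (0:ℝ)..u, ((u - τ) ^ r : ℝ) • f τ)
        = ∫ v in (0:ℝ)..u, ((v : ℝ) ^ r : ℝ) • f (u - v) := by
      have := intervalIntegral.integral_comp_sub_left
        (a := (0:ℝ)) (b := u) (fun v => ((v : ℝ) ^ r : ℝ) • f (u - v)) u
      simp only [sub_self, sub_zero] at this
      rw [← this]
      refine intervalIntegral.integral_congr fun τ hτ => ?_
      simp [sub_sub_cancel]
    rw [e1, intervalIntegral.integral_of_le hu.1, hψ, hμT,
      MeasureTheory.integral_indicator measurableSet_Ioc,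
      Measure.restrict_restrict measurableSet_Ioc, Set.Ioc_inter_Ioc, max_self,
      min_eq_left hu.2]
  have contE : ∀ u₀ ∈ Set.Icc (0:ℝ) T, ContinuousAt (fun u => ∫ v, ψ u v ∂μT) u₀ := by
    intro u₀ hu₀
    refine MeasureTheory.continuousAt_of_dominated (bound := fun v => v ^ r * M) ?_ ?_ ?_ ?_
    · filter_upwards with u
      refine Measurable.aestronglyMeasurable ?_
      exact ((measurable_rpow_const r).smul
        ((hf.comp (continuous_const.sub continuous_id)).measurable)).indicator
        measurableSet_Ioc
    · filter_upwards [Iio_mem_nhds (show u₀ < T + 1 by linarith [hu₀.2])] with u hu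
      filter_upwards [ae_restrict_mem measurableSet_Ioc] with v hv
      simp only [hψ]
      by_cases h : v ∈ Set.Ioc 0 u
      · rw [Set.indicator_of_mem h]
        rw [norm_smul, Real.norm_eq_abs, abs_of_nonneg (Real.rpow_nonneg hv.1.le r)]
        refine mul_le_mul_of_nonneg_left ?_ (Real.rpow_nonneg hv.1.le r)
        have hu' : u < T + 1 := hu
        exact hM (u - v) ⟨by linarith [h.2], by linarith [hv.1]⟩
      · rw [Set.indicator_of_notMem h, norm_zero]
        exact mul_nonneg (Real.rpow_nonneg hv.1.le r) hM0
    · have h1 := intervalIntegrable_iff.mp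
        ((intervalIntegral.intervalIntegrable_rpow' (a := (0:ℝ)) (b := T) hr).mul_const M)
      rwa [Set.uIoc_of_le hT.le] at h1
    · have hne : ∀ᵐ v : ℝ ∂volume, v ≠ u₀ := by
        rw [MeasureTheory.ae_iff]
        simp [not_not]
      filter_upwards [ae_restrict_mem measurableSet_Ioc, ae_restrict_of_ae hne] with v hv hvne
      rcases lt_or_gt_of_ne hvne with hlt | hgt
      · have hev : (fun u => ψ u v) =ᶠ[nhds u₀] fun u => ((v : ℝ) ^ r : ℝ) • f (u - v) := by
          filter_upwards [Ioi_mem_nhds hlt] with u hu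
          simp only [hψ]
          exact Set.indicator_of_mem (Set.mem_Ioc.mpr ⟨hv.1, le_of_lt hu⟩) _
        refine ContinuousAt.congr ?_ hev.symm
        exact (Continuous.smul (f := fun _ => ((v : ℝ) ^ r : ℝ)) (g := fun u => f (u - v))
          continuous_const (hf.comp (continuous_sub_right v))).continuousAt
      · have hev : (fun u => ψ u v) =ᶠ[nhds u₀] fun _ => (0 : ℂ) := by
          filter_upwards [Iio_mem_nhds hgt] with u hu
          simp only [hψ]
          exact Set.indicator_of_notMem (fun h => absurd h.2 (not_le.mpr hu)) _
        exact ContinuousAt.congr continuousAt_const hev.symm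
  intro u₀ hu₀
  exact ((contE u₀ hu₀).continuousWithinAt.congr hDE (hDE u₀ hu₀)).mono (by intro x hx; exact hx)

/-- If a `C¹` function `ρ : [0,∞) → ℂ` satisfies the Volterra integral equation
`ρ t = ρ 0 + (1/Γ α) ∫₀ᵗ (t-τ)^(α-1) L(ρ τ) dτ` for a continuous linear map `L` and
`0 < α < 1`, then its Caputo derivative satisfies `ᶜD^α ρ t = L (ρ t)` for all `t > 0`. -/
theorem caputo_of_volterra (α : ℝ) (hα : 0 < α) (hα1 : α < 1)
    (ρ ρ' : ℝ → ℂ) (L : ℂ →L[ℂ] ℂ)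
    (hderiv : ∀ t, 0 ≤ t → HasDerivAt ρ (ρ' t) t)
    (hcont : ContinuousOn ρ' (Set.Ici 0))
    (hvolterra : ∀ t, 0 ≤ t →
      ρ t = ρ 0 + (1 / Real.Gamma α) •
        ∫ τ in (0:ℝ)..t, ((t - τ) ^ (α - 1) : ℝ) • L (ρ τ)) :
    ∀ t, 0 < t →
      (1 / Real.Gamma (1 - α)) •
        (∫ τ in (0:ℝ)..t, ((t - τ) ^ (-α) : ℝ) • ρ' τ) = L (ρ t) := by
  intro t ht
  have hΓα : (0:ℝ) < Real.Gamma α := Real.Gamma_pos_of_pos hα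
  have hΓ1α : (0:ℝ) < Real.Gamma (1 - α) := Real.Gamma_pos_of_pos (by linarith)
  -- continuous extensions
  set f : ℝ → ℂ := fun x => ρ' (max x 0) with hf_def
  have hf : Continuous f :=
    hcont.comp_continuous (continuous_id.max continuous_const) fun x => le_max_right x 0
  have hf_eq : ∀ x, 0 ≤ x → f x = ρ' x := fun x hx => by
    rw [hf_def]; simp [max_eq_left hx]
  have hρOn : ContinuousOn ρ (Set.Ici 0) :=
    fun x hx => ((hderiv x hx).continuousAt).continuousWithinAt
  set g : ℝ → ℂ := fun x => L (ρ (max x 0)) with hg_def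
  have hg : Continuous g := L.continuous.comp
    (hρOn.comp_continuous (continuous_id.max continuous_const) fun x => le_max_right x 0)
  have hg_eq : ∀ x, 0 ≤ x → g x = L (ρ x) := fun x hx => by
    rw [hg_def]; simp [max_eq_left hx]
  -- FTC
  have hFTC : ∀ τ, 0 ≤ τ → (∫ s in (0:ℝ)..τ, f s) = ρ τ - ρ 0 := by
    intro τ hτ
    have h1 : (∫ s in (0:ℝ)..τ, ρ' s) = ρ τ - ρ 0 := by
      refine intervalIntegral.integral_eq_sub_of_hasDerivAt (fun s hs => ?_) ?_
      · rw [Set.uIcc_of_le hτ] at hs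
        exact hderiv s hs.1
      · refine (hcont.mono ?_).intervalIntegrable
        rw [Set.uIcc_of_le hτ]
        exact fun s hs => hs.1
    rw [← h1]
    refine intervalIntegral.integral_congr fun s hs => ?_
    rw [Set.uIcc_of_le hτ] at hs
    exact hf_eq s hs.1
  -- Volterra restated
  have hvolt : ∀ τ, 0 ≤ τ → (∫ s in (0:ℝ)..τ, ((τ - s) ^ (α - 1) : ℝ) • g s)
      = Real.Gamma α • (ρ τ - ρ 0) := by
    intro τ hτ
    have h0 := hvolterra τ hτ
    have h1 : (∫ s in (0:ℝ)..τ, ((τ - s) ^ (α - 1) : ℝ) • L (ρ s))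
        = ∫ s in (0:ℝ)..τ, ((τ - s) ^ (α - 1) : ℝ) • g s := by
      refine intervalIntegral.integral_congr fun s hs => ?_
      rw [Set.uIcc_of_le hτ] at hs
      rw [hg_eq s hs.1]
    rw [h1] at h0
    have h2 : ρ τ - ρ 0 = (1 / Real.Gamma α) •
        ∫ s in (0:ℝ)..τ, ((τ - s) ^ (α - 1) : ℝ) • g s := by
      rw [h0, add_sub_cancel_left]
    rw [h2, smul_smul]
    rw [show Real.Gamma α * (1 / Real.Gamma α) = 1 by field_simp, one_smul]
  -- the three Fubini identities, at an arbitrary u > 0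
  have key : ∀ u, 0 < u →
      (∫ τ in (0:ℝ)..u, (∫ s in (0:ℝ)..τ, ((τ - s) ^ (-α) : ℝ) • f s))
        = Real.Gamma (1 - α) • ∫ s in (0:ℝ)..u, g s := by
    intro u hu
    -- Key3 : a = 1, b = 1-α
    have k3 := fubini_rl (a := 1) (b := 1 - α) one_pos (by linarith) hf hu
    rw [show (1:ℝ) - 1 = 0 by ring, show (1:ℝ) - α - 1 = -α by ring,
      show (1:ℝ) + (1 - α) - 1 = 1 - α by ring, show (1:ℝ) + (1 - α) = 2 - α by ring,
      Real.Gamma_one, one_mul] at k3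
    simp only [Real.rpow_zero, one_smul] at k3
    -- Key2 : a = 1-α, b = 1
    have k2 := fubini_rl (a := 1 - α) (b := 1) (by linarith) one_pos hf hu
    rw [show (1:ℝ) - α - 1 = -α by ring, show (1:ℝ) - 1 = 0 by ring,
      show (1:ℝ) - α + 1 - 1 = 1 - α by ring, show (1:ℝ) - α + 1 = 2 - α by ring,
      Real.Gamma_one, mul_one] at k2
    simp only [Real.rpow_zero, one_smul] at k2
    -- Key1 : a = 1-α, b = α, f := g
    have k1 := fubini_rl (a := 1 - α) (b := α) (by linarith) hα hg hu
    rw [show (1:ℝ) - α - 1 = -α by ring, show (1:ℝ) - α + α - 1 = 0 by ring,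
      show (1:ℝ) - α + α = 1 by ring, Real.Gamma_one, div_one] at k1
    simp only [Real.rpow_zero, one_smul] at k1
    -- rewrite k2's inner integral using FTC
    have k2' : (∫ τ in (0:ℝ)..u, ((u - τ) ^ (-α) : ℝ) • (ρ τ - ρ 0))
        = (Real.Gamma (1 - α) / Real.Gamma (2 - α)) •
          ∫ s in (0:ℝ)..u, ((u - s) ^ (1 - α) : ℝ) • f s := by
      rw [← k2]
      refine intervalIntegral.integral_congr fun τ hτ => ?_
      rw [Set.uIcc_of_le hu.le] at hτ
      rw [hFTC τ hτ.1]
    -- rewrite k1's inner integral using hvolt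
    have k1' : Real.Gamma α • (∫ τ in (0:ℝ)..u, ((u - τ) ^ (-α) : ℝ) • (ρ τ - ρ 0))
        = Real.Gamma α • (Real.Gamma (1 - α) • ∫ s in (0:ℝ)..u, g s) := by
      have e1 : (∫ τ in (0:ℝ)..u, ((u - τ) ^ (-α) : ℝ) •
          (∫ s in (0:ℝ)..τ, ((τ - s) ^ (α - 1) : ℝ) • g s))
          = ∫ τ in (0:ℝ)..u, ((u - τ) ^ (-α) : ℝ) • (Real.Gamma α • (ρ τ - ρ 0)) := by
        refine intervalIntegral.integral_congr fun τ hτ => ?_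
        rw [Set.uIcc_of_le hu.le] at hτ
        rw [hvolt τ hτ.1]
      rw [e1] at k1
      rw [smul_smul, mul_comm (Real.Gamma α), ← k1, ← intervalIntegral.integral_smul]
      refine intervalIntegral.integral_congr fun τ hτ => ?_
      rw [smul_comm]
    have k1'' : (∫ τ in (0:ℝ)..u, ((u - τ) ^ (-α) : ℝ) • (ρ τ - ρ 0))
        = Real.Gamma (1 - α) • ∫ s in (0:ℝ)..u, g s :=
      smul_right_injective ℂ hΓα.ne' k1'
    rw [k3, ← k2', k1'']
  -- differentiate both sides at t
  set C : ℝ → ℂ := fun u => ∫ s in (0:ℝ)..u, ((u - s) ^ (-α) : ℝ) • f s with hC_def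
  have hCcont : ContinuousOn C (Set.Icc 0 (t + 1)) :=
    conv_continuousOn (by linarith : (-1:ℝ) < -α) hf (by linarith)
  have hd1 : HasDerivAt (fun u => ∫ τ in (0:ℝ)..u, C τ) (C t) t := by
    refine intervalIntegral.integral_hasDerivAt_right ?_ ?_ ?_
    · refine (hCcont.mono ?_).intervalIntegrable
      rw [Set.uIcc_of_le ht.le]
      exact Set.Icc_subset_Icc le_rfl (by linarith)
    · exact (hCcont.mono Set.Ioo_subset_Icc_self).stronglyMeasurableAtFilter isOpen_Ioo t
        ⟨ht, by linarith⟩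
    · exact hCcont.continuousAt (Icc_mem_nhds (by linarith) (by linarith))
  have hd2 : HasDerivAt (fun u => Real.Gamma (1 - α) • ∫ τ in (0:ℝ)..u, g τ)
      (Real.Gamma (1 - α) • g t) t :=
    ((hg.integral_hasStrictDerivAt 0 t).hasDerivAt).const_smul (Real.Gamma (1 - α))
  have hev : (fun u => ∫ τ in (0:ℝ)..u, C τ)
      =ᶠ[nhds t] fun u => Real.Gamma (1 - α) • ∫ τ in (0:ℝ)..u, g τ := by
    filter_upwards [Ioi_mem_nhds ht] with u hu
    exact key u hu
  have hCt : C t = Real.Gamma (1 - α) • g t := hd1.unique (hd2.congr_of_eventuallyEq hev)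
  -- conclude
  have e2 : (∫ τ in (0:ℝ)..t, ((t - τ) ^ (-α) : ℝ) • ρ' τ) = C t := by
    refine intervalIntegral.integral_congr fun τ hτ => ?_
    rw [Set.uIcc_of_le ht.le] at hτ
    rw [hf_eq τ hτ.1]
  rw [e2, hCt, smul_smul, show (1 / Real.Gamma (1 - α)) * Real.Gamma (1 - α) = 1 by
    field_simp, one_smul]
  exact hg_eq t ht.le
end

section
/- For Re(s) > 0, α > 0, and λ ∈ ℂ with |λ| < Re(s)^α, the Laplace transform of t ↦ E_α(λ t^α) equals s^{α−1}/(s^α − λ), i.e., ∫₀^∞ e^{−st} E_α(λ t^α) dt = s^{α−1}/(s^α − λ). -/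
open MeasureTheory Set Complex Metric

lemma aux_int_real {a : ℝ} (ha : 0 < a) {σ : ℝ} (hσ : 0 < σ) :
    IntegrableOn (fun t : ℝ ↦ t ^ (a - 1) * Real.exp (-σ * t)) (Set.Ioi 0) := by
  have := integrableOn_rpow_mul_exp_neg_mul_rpow (s := a - 1) (p := 1) (b := σ)
    (by linarith) one_pos hσ
  simpa [Real.rpow_one] using this

lemma aux_meas {a : ℝ} (s : ℂ) :
    AEStronglyMeasurable (fun t : ℝ ↦ ((t ^ (a - 1) : ℝ) : ℂ) * Complex.exp (-s * t))
      (volume.restrict (Set.Ioi 0)) := by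
  apply ContinuousOn.aestronglyMeasurable _ measurableSet_Ioi
  apply ContinuousOn.mul
  · exact Complex.continuous_ofReal.comp_continuousOn <| fun t ht =>
      (Real.continuousAt_rpow_const t _ (Or.inl (ne_of_gt ht))).continuousWithinAt
  · exact (Complex.continuous_exp.comp ((continuous_const.mul Complex.continuous_ofReal))).continuousOn

lemma aux_norm {a : ℝ} (s : ℂ) {t : ℝ} (ht : 0 < t) :
    ‖((t ^ (a - 1) : ℝ) : ℂ) * Complex.exp (-s * t)‖ = t ^ (a - 1) * Real.exp (-s.re * t) := by
  rw [norm_mul, Complex.norm_exp]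
  simp [_root_.abs_of_nonneg (Real.rpow_nonneg ht.le (a-1))]

lemma aux_int_c {a : ℝ} (ha : 0 < a) {s : ℂ} (hs : 0 < s.re) :
    IntegrableOn (fun t : ℝ ↦ ((t ^ (a - 1) : ℝ) : ℂ) * Complex.exp (-s * t)) (Set.Ioi 0) := by
  apply Integrable.mono' (aux_int_real ha hs) (aux_meas s)
  filter_upwards [ae_restrict_mem measurableSet_Ioi] with t ht
  rw [aux_norm s ht]

lemma aux_meas' {a : ℝ} (z : ℂ) :
    AEStronglyMeasurable (fun t : ℝ ↦ ((t ^ (a - 1) : ℝ) : ℂ) * (-(t:ℂ) * Complex.exp (-z * t)))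
      (volume.restrict (Set.Ioi 0)) := by
  apply ContinuousOn.aestronglyMeasurable _ measurableSet_Ioi
  apply ContinuousOn.mul
  · exact Complex.continuous_ofReal.comp_continuousOn <| fun t ht =>
      (Real.continuousAt_rpow_const t _ (Or.inl (ne_of_gt ht))).continuousWithinAt
  · exact ((Complex.continuous_ofReal.neg).mul
      (Complex.continuous_exp.comp (continuous_const.mul Complex.continuous_ofReal))).continuousOn

/-- Key lemma: the Laplace transform of `t^(a-1)` with complex rate. -/
lemma key {a : ℝ} (ha : 0 < a) {s : ℂ} (hs : 0 < s.re) :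
    ∫ t in Ioi (0:ℝ), ((t ^ (a - 1) : ℝ) : ℂ) * Complex.exp (-s * t)
      = Complex.Gamma a * s ^ (-(a : ℂ)) := by
  set F : ℂ → ℂ := fun z => ∫ t in Ioi (0:ℝ), ((t ^ (a - 1) : ℝ) : ℂ) * Complex.exp (-z * t)
  set G : ℂ → ℂ := fun z => Complex.Gamma a * z ^ (-(a : ℂ))
  set U : Set ℂ := {z | 0 < z.re}
  have hUo : IsOpen U := isOpen_lt continuous_const Complex.continuous_re
  have hUc : IsPreconnected U := (convex_halfSpace_re_gt 0).isPreconnected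
  -- F is differentiable on U
  have hF : DifferentiableOn ℂ F U := by
    intro z₀ hz₀
    have hz₀' : 0 < z₀.re := hz₀
    set ε : ℝ := z₀.re / 2 with hε
    have hεpos : 0 < ε := by positivity
    have hre : ∀ z ∈ ball z₀ ε, ε < z.re := by
      intro z hz
      have : |(z - z₀).re| ≤ ‖z - z₀‖ := Complex.abs_re_le_norm _
      rw [mem_ball, Complex.dist_eq] at hz
      have h2 := (abs_lt.mp (lt_of_le_of_lt this hz)).1
      simp only [Complex.sub_re] at h2
      linarith
    have key := hasDerivAt_integral_of_dominated_loc_of_deriv_le (hs := ball_mem_nhds z₀ hεpos)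
      (F := fun z t => ((t ^ (a - 1) : ℝ) : ℂ) * Complex.exp (-z * t))
      (F' := fun z t => ((t ^ (a - 1) : ℝ) : ℂ) * (-(t:ℂ) * Complex.exp (-z * t)))
      (x₀ := z₀) (bound := fun t => t ^ a * Real.exp (-ε * t))
      (μ := volume.restrict (Ioi 0))
      (Filter.Eventually.of_forall fun z => aux_meas z)
      ((aux_int_c ha hz₀'))
      ?_ ?_ ?_ ?_
    · exact key.2.differentiableAt.differentiableWithinAt
    · -- measurability of F' z₀
      exact aux_meas' z₀
    · -- bound
      filter_upwards [ae_restrict_mem measurableSet_Ioi] with t ht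
      intro z hz
      have hzre := hre z hz
      rw [norm_mul, norm_mul, norm_neg]
      have e1 : ‖((t ^ (a - 1) : ℝ) : ℂ)‖ = t ^ (a - 1) := by
        simp [_root_.abs_of_nonneg (Real.rpow_nonneg ht.le (a - 1))]
      have e2 : ‖(t:ℂ)‖ = t := by simp [_root_.abs_of_nonneg (mem_Ioi.mp ht).le]
      have e3 : ‖Complex.exp (-z * t)‖ = Real.exp (-z.re * t) := by
        rw [Complex.norm_exp]; simp
      rw [e1, e2, e3, ← mul_assoc]
      have e4 : t ^ (a - 1) * t = t ^ a := by
        rw [← Real.rpow_add_one ht.ne' (a - 1)]; ring_nf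
      rw [e4]
      have : Real.exp (-z.re * t) ≤ Real.exp (-ε * t) := by
        apply Real.exp_le_exp.mpr
        have ht' : (0:ℝ) < t := ht
        nlinarith [mul_le_mul_of_nonneg_right hzre.le ht'.le]
      exact mul_le_mul_of_nonneg_left this (Real.rpow_nonneg ht.le a)
    · -- bound integrable
      have := aux_int_real (a := a + 1) (by linarith) hεpos
      simpa [IntegrableOn] using this
    · -- derivative
      filter_upwards [ae_restrict_mem measurableSet_Ioi] with t ht
      intro z hz
      have h1 : HasDerivAt (fun z : ℂ => -z * t) (-(t:ℂ)) z := by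
        simpa using ((hasDerivAt_id z).neg.mul_const (t:ℂ))
      exact (h1.cexp.const_mul _).congr_deriv (by ring)
  -- G is differentiable on U
  have hG : DifferentiableOn ℂ G U := by
    intro z hz
    exact (((Complex.hasStrictDerivAt_cpow_const (Or.inl hz)).hasDerivAt.differentiableAt).const_mul
      _).differentiableWithinAt
  -- F = G on positive reals
  have hFG : ∀ r : ℝ, 0 < r → F (r : ℂ) = G (r : ℂ) := by
    intro r hr
    have h1 := Complex.integral_cpow_mul_exp_neg_mul_Ioi
      (a := (a : ℂ)) (r := r) (by simpa using ha) hr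
    have h2 : ∀ t ∈ Ioi (0:ℝ),
        ((t ^ (a - 1) : ℝ) : ℂ) * Complex.exp (-(r:ℂ) * t)
          = (t : ℂ) ^ ((a:ℂ) - 1) * Complex.exp (-((r:ℝ) * t : ℝ) : ℂ) := by
      intro t ht
      rw [Complex.ofReal_cpow (le_of_lt ht)]
      push_cast
      ring_nf
    have : F (r : ℂ) = (1 / (r:ℂ)) ^ (a:ℂ) * Complex.Gamma a := by
      rw [show F (r:ℂ) = ∫ t in Ioi (0:ℝ), ((t ^ (a - 1) : ℝ) : ℂ) * Complex.exp (-(r:ℂ) * t)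
        from rfl, setIntegral_congr_fun measurableSet_Ioi h2, ← h1]
      congr 1 with t
      push_cast
      ring_nf
    rw [this]
    have hrne : (r : ℂ) ≠ 0 := Complex.ofReal_ne_zero.mpr hr.ne'
    have harg : Complex.arg (r : ℂ) ≠ Real.pi := by
      rw [Complex.arg_ofReal_of_nonneg hr.le]
      exact fun h => Real.pi_ne_zero h.symm
    show _ = Complex.Gamma a * (r:ℂ) ^ (-(a:ℂ))
    rw [one_div, Complex.inv_cpow _ _ harg, ← Complex.cpow_neg, mul_comm]
  -- identity theorem
  have hone : (1 : ℂ) ∈ U := by simp [U]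
  have hfreq : ∃ᶠ z in nhdsWithin (1:ℂ) {(1:ℂ)}ᶜ, F z = G z := by
    have htend : Filter.Tendsto (fun n : ℕ => ((1 + (n+1:ℝ)⁻¹ : ℝ) : ℂ)) Filter.atTop
        (nhdsWithin (1:ℂ) {(1:ℂ)}ᶜ) := by
      apply tendsto_nhdsWithin_of_tendsto_nhds_of_eventually_within
      · have : Filter.Tendsto (fun n : ℕ => (1 + (n+1:ℝ)⁻¹ : ℝ)) Filter.atTop (nhds 1) := by
          simpa [one_div] using (tendsto_const_nhds : Filter.Tendsto (fun _ : ℕ => (1:ℝ)) Filter.atTop (nhds 1)).add (tendsto_one_div_add_atTop_nhds_zero_nat)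
        have := (Complex.continuous_ofReal.tendsto 1).comp this
        simpa [Function.comp_def] using this
      · filter_upwards with n
        simp only [Set.mem_compl_iff, Set.mem_singleton_iff]
        intro h
        have : (1 + (n+1:ℝ)⁻¹ : ℝ) = 1 := by exact_mod_cast h
        have hpos : (0:ℝ) < (n+1:ℝ)⁻¹ := by positivity
        linarith
    apply htend.frequently
    apply Filter.Frequently.of_forall
    intro n
    exact hFG _ (by positivity)
  have := (hF.analyticOnNhd hUo).eqOn_of_preconnected_of_frequently_eq
    (hG.analyticOnNhd hUo) hUc hone hfreq
  exact this hs

/-- The (complex) Mittag–Leffler function `E_α(z) = ∑' n, z^n / Γ(α n + 1)`. -/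
noncomputable def mittagLeffler (α : ℝ) (z : ℂ) : ℂ :=
  ∑' n : ℕ, z ^ n / Complex.Gamma (α * n + 1)

/-- For `Re s > 0`, `α > 0`, and `|λ| < (Re s)^α`, the Laplace transform of
`t ↦ E_α(λ t^α)` equals `s^(α-1)/(s^α − λ)`. -/
theorem laplace_mittagLeffler (α : ℝ) (hα : 0 < α) (s : ℂ) (hs : 0 < s.re)
    (lam : ℂ) (hlam : ‖lam‖ < s.re ^ α) :
    ∫ t in Set.Ioi (0:ℝ),
        Complex.exp (-s * t) * mittagLeffler α (lam * ((t ^ α : ℝ) : ℂ)) =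
      s ^ ((α : ℂ) - 1) / (s ^ (α : ℂ) - lam) := by
  have hσ : 0 < s.re := hs
  have hsne : s ≠ 0 := fun h => by rw [h] at hs; simp at hs
  set f : ℕ → ℝ → ℂ := fun n t =>
    (lam ^ n / Complex.Gamma ((α * n + 1 : ℝ) : ℂ)) *
      (((t ^ (α * n) : ℝ) : ℂ) * Complex.exp (-s * t)) with hf
  have hapos : ∀ n : ℕ, (0:ℝ) < α * n + 1 := fun n => by positivity
  have hgamma_pos : ∀ n : ℕ, 0 < Real.Gamma (α * n + 1) := fun n =>
    Real.Gamma_pos_of_pos (hapos n)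
  have hgamma_eq : ∀ n : ℕ, Complex.Gamma ((α * n + 1 : ℝ) : ℂ)
      = (Real.Gamma (α * n + 1) : ℂ) := fun n => Complex.Gamma_ofReal _
  have hgamma_ne : ∀ n : ℕ, Complex.Gamma ((α * n + 1 : ℝ) : ℂ) ≠ 0 := fun n => by
    rw [hgamma_eq n]
    exact_mod_cast (hgamma_pos n).ne'
  -- pointwise identity
  have hpt : ∀ t ∈ Ioi (0:ℝ),
      Complex.exp (-s * t) * mittagLeffler α (lam * ((t ^ α : ℝ) : ℂ)) = ∑' n, f n t := by
    intro t ht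
    rw [mittagLeffler, ← tsum_mul_left]
    refine tsum_congr fun n => ?_
    have hx : ((t ^ α : ℝ) : ℂ) ^ n = ((t ^ (α * n) : ℝ) : ℂ) := by
      rw [← Complex.ofReal_pow]
      congr 1
      rw [← Real.rpow_natCast (t ^ α) n, ← Real.rpow_mul (le_of_lt ht)]
    have hc : ((α * n + 1 : ℝ) : ℂ) = (α : ℂ) * n + 1 := by push_cast; ring
    simp only [hf, mul_pow, hx, hc]
    ring
  -- measurability
  have hmeas : ∀ n : ℕ, AEStronglyMeasurable (f n) (volume.restrict (Ioi 0)) := fun n => by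
    have := aux_meas (a := α * n + 1) s
    rw [add_sub_cancel_right] at this
    exact this.const_mul _
  -- integrability
  have hint : ∀ n : ℕ, IntegrableOn (f n) (Ioi 0) := fun n => by
    have := aux_int_c (hapos n) hσ
    rw [add_sub_cancel_right] at this
    exact this.const_mul _
  -- norm of f n
  have hnorm : ∀ n : ℕ, ∀ t ∈ Ioi (0:ℝ), ‖f n t‖
      = (‖lam‖ ^ n / Real.Gamma (α * n + 1)) *
        (t ^ (α * n) * Real.exp (-(s.re * t))) := by
    intro n t ht
    have h1 := aux_norm (a := α * n + 1) s (ht : (0:ℝ) < t)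
    rw [add_sub_cancel_right] at h1
    rw [norm_mul, h1, norm_div, norm_pow, hgamma_eq n]
    rw [Complex.norm_real, Real.norm_eq_abs,
      _root_.abs_of_pos (hgamma_pos n)]
    ring_nf
  -- value of real integral of the norm
  have hRint : ∀ n : ℕ, ∫ t in Ioi (0:ℝ), ‖f n t‖
      = (‖lam‖ * (1 / s.re) ^ α) ^ n * (1 / s.re) := by
    intro n
    rw [setIntegral_congr_fun measurableSet_Ioi (hnorm n), integral_const_mul,
      show α * (n:ℝ) = α * n + 1 - 1 by ring,
      Real.integral_rpow_mul_exp_neg_mul_Ioi (hapos n) hσ]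
    have heq1 : (1 / s.re) ^ (α * n + 1) = ((1 / s.re) ^ α) ^ (n : ℝ) * (1 / s.re) := by
      rw [Real.rpow_add_one (by positivity), Real.rpow_mul (by positivity)]
    rw [heq1, Real.rpow_natCast]
    field_simp [(hgamma_pos n).ne']
    ring
  -- the sum of lintegrals is finite
  have hfin : ∑' n : ℕ, ∫⁻ t in Ioi (0:ℝ), ‖f n t‖ₑ ≠ ⊤ := by
    have heq : ∀ n : ℕ, ∫⁻ t in Ioi (0:ℝ), ‖f n t‖ₑ
        = ENNReal.ofReal ((‖lam‖ * (1 / s.re) ^ α) ^ n * (1 / s.re)) := fun n => by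
      rw [← ofReal_integral_norm_eq_lintegral_enorm (hint n), hRint n]
    simp only [heq]
    have hr : ‖lam‖ * (1 / s.re) ^ α < 1 := by
      rw [one_div, Real.inv_rpow hσ.le, ← div_eq_mul_inv,
        div_lt_one (Real.rpow_pos_of_pos hσ α)]
      exact hlam
    have hr0 : (0:ℝ) ≤ ‖lam‖ * (1 / s.re) ^ α := by positivity
    have heq2 : ∀ n : ℕ, ENNReal.ofReal ((‖lam‖ * (1 / s.re) ^ α) ^ n * (1 / s.re))
        = (ENNReal.ofReal (‖lam‖ * (1 / s.re) ^ α)) ^ n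
          * ENNReal.ofReal (1 / s.re) := fun n => by
      rw [ENNReal.ofReal_mul (by positivity), ENNReal.ofReal_pow hr0]
    simp only [heq2]
    rw [ENNReal.tsum_mul_right, ENNReal.tsum_geometric]
    apply ENNReal.mul_ne_top _ ENNReal.ofReal_ne_top
    rw [ENNReal.inv_ne_top]
    refine ne_of_gt ?_
    rw [tsub_pos_iff_lt]
    exact ENNReal.ofReal_lt_one.mpr hr
  -- value of each complex integral
  have hI : ∀ n : ℕ, ∫ t in Ioi (0:ℝ), f n t = (lam * (s ^ (α:ℂ))⁻¹) ^ n * s⁻¹ := by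
    intro n
    rw [hf]
    simp only []
    rw [integral_const_mul]
    have k := key (hapos n) hs
    rw [add_sub_cancel_right] at k
    rw [k]
    have hsc : s ^ (-(((α * n + 1 : ℝ)):ℂ)) = ((s ^ (α:ℂ)) ^ n * s)⁻¹ := by
      rw [Complex.cpow_neg]
      congr 1
      have hc : ((α * n + 1 : ℝ) : ℂ) = (n : ℂ) * α + 1 := by push_cast; ring
      rw [hc, Complex.cpow_add _ _ hsne, Complex.cpow_nat_mul, Complex.cpow_one]
    rw [hsc, div_eq_mul_inv, mul_assoc,
      ← mul_assoc (Complex.Gamma ((α * n + 1 : ℝ) : ℂ))⁻¹,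
      inv_mul_cancel₀ (hgamma_ne n), one_mul, mul_inv, mul_pow, inv_pow, mul_assoc]
  -- abs of s^α
  have habs : ‖s ^ (α:ℂ)‖ = ‖s‖ ^ α := by
    rw [Complex.norm_cpow_real]
  have hre_le : s.re ^ α ≤ ‖s‖ ^ α :=
    Real.rpow_le_rpow hσ.le (Complex.re_le_norm s) hα.le
  have hαpos : 0 < ‖s‖ ^ α :=
    Real.rpow_pos_of_pos (lt_of_lt_of_le hσ (Complex.re_le_norm s)) α
  have hw : ‖lam * (s ^ (α:ℂ))⁻¹‖ < 1 := by
    rw [norm_mul, norm_inv, habs, ← div_eq_mul_inv, div_lt_one hαpos]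
    linarith
  have hsα : s ^ (α:ℂ) ≠ 0 := by
    simp [Complex.cpow_eq_zero_iff, hsne]
  have hden : s ^ (α:ℂ) - lam ≠ 0 := by
    intro h
    have h2 : s ^ (α:ℂ) = lam := by linear_combination h
    rw [← h2] at hlam
    rw [habs] at hlam
    linarith
  calc ∫ t in Ioi (0:ℝ), Complex.exp (-s * t) * mittagLeffler α (lam * ((t ^ α : ℝ) : ℂ))
      = ∫ t in Ioi (0:ℝ), ∑' n, f n t := setIntegral_congr_fun measurableSet_Ioi hpt
    _ = ∑' n : ℕ, ∫ t in Ioi (0:ℝ), f n t := integral_tsum hmeas hfin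
    _ = ∑' n : ℕ, (lam * (s ^ (α:ℂ))⁻¹) ^ n * s⁻¹ := tsum_congr hI
    _ = (1 - lam * (s ^ (α:ℂ))⁻¹)⁻¹ * s⁻¹ := by
        rw [tsum_mul_right, tsum_geometric_of_norm_lt_one hw]
    _ = s ^ ((α : ℂ) - 1) / (s ^ (α : ℂ) - lam) := by
        rw [Complex.cpow_sub _ _ hsne, Complex.cpow_one]
        have h1 : 1 - lam * (s ^ (α:ℂ))⁻¹ = (s ^ (α:ℂ) - lam) * (s ^ (α:ℂ))⁻¹ := by
          field_simp
        rw [h1, mul_inv, inv_inv, div_div, div_eq_mul_inv, mul_inv]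
        ring
end
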